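/- Let S be a finite nonempty set, P a nonempty compact subset of Δ(S), and a ∈ [1/2, 1]. Define U : ℝ^S → ℝ by U(φ) = a·min_{p∈P} E_p[φ] + (1−a)·max_{p∈P} E_p[φ]. Then for all φ, ψ ∈ ℝ^S, α ∈ (0,1), and c ∈ ℝ, if U(φ) = U(ψ) and αφ + (1−α)ψ = c·1, then c ≥ U(φ). -/

import Mathlib

open Set

noncomputable section

def simplex (S : Type*) [Fintype S] : Set (S → ℝ) :=
  {p | (∀ s, 0 ≤ p s) ∧ ∑ s, p s = 1}

def expE {S : Type*} [Fintype S] (p φ : S → ℝ) : ℝ := ∑ s, p s * φ s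

def minEU {S : Type*} [Fintype S] (P : Set (S → ℝ)) (φ : S → ℝ) : ℝ :=
  sInf ((fun p => expE p φ) '' P)

def maxEU {S : Type*} [Fintype S] (P : Set (S → ℝ)) (φ : S → ℝ) : ℝ :=
  sSup ((fun p => expE p φ) '' P)

def maxmin {S : Type*} [Fintype S] (C : Set (Set (S → ℝ))) (φ : S → ℝ) : ℝ :=
  sSup ((fun P => minEU P φ) '' C)

def minmax {S : Type*} [Fintype S] (C : Set (Set (S → ℝ))) (φ : S → ℝ) : ℝ :=
  sInf ((fun P => maxEU P φ) '' C)

/-- the α-maxmin functional with weight a ≥ 1/2 on the worst case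
satisfies the weak uncertainty aversion inequality. -/
theorem stmt8 {S : Type*} [Fintype S] [Nonempty S]
    (P : Set (S → ℝ)) (hne : P.Nonempty) (hcomp : IsCompact P)
    (hsub : P ⊆ simplex S) (a : ℝ) (ha : a ∈ Set.Icc (1/2 : ℝ) 1)
    (φ ψ : S → ℝ) (α c : ℝ) (h0 : 0 < α) (h1 : α < 1)
    (hU : a * minEU P φ + (1 - a) * maxEU P φ
        = a * minEU P ψ + (1 - a) * maxEU P ψ)
    (hhedge : ∀ s, α * φ s + (1 - α) * ψ s = c) :
    c ≥ a * minEU P φ + (1 - a) * maxEU P φ := by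
  obtain ⟨ha1, ha2⟩ := ha
  have hcontφ : Continuous fun p : S → ℝ => expE p φ :=
    continuous_finset_sum _ fun s _ => (continuous_apply s).mul continuous_const
  have hcontψ : Continuous fun p : S → ℝ => expE p ψ :=
    continuous_finset_sum _ fun s _ => (continuous_apply s).mul continuous_const
  have hkey : ∀ p ∈ P, α * expE p φ + (1 - α) * expE p ψ = c := by
    intro p hp
    have hsum := (hsub hp).2
    have h1 : ∑ s, p s * (α * φ s + (1 - α) * ψ s)
        = α * expE p φ + (1 - α) * expE p ψ := by
      simp only [expE, Finset.mul_sum]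
      rw [← Finset.sum_add_distrib]
      exact Finset.sum_congr rfl fun s _ => by ring
    have h2 : ∑ s, p s * (α * φ s + (1 - α) * ψ s) = c := by
      calc ∑ s, p s * (α * φ s + (1 - α) * ψ s) = ∑ s, p s * c :=
            Finset.sum_congr rfl fun s _ => by rw [hhedge]
        _ = c := by rw [← Finset.sum_mul, hsum, one_mul]
    linarith
  simp only [minEU, maxEU] at hU ⊢
  set Kφ := (fun p => expE p φ) '' P with hKφ
  set Kψ := (fun p => expE p ψ) '' P with hKψ
  have hKφc : IsCompact Kφ := hcomp.image hcontφ
  have hKψc : IsCompact Kψ := hcomp.image hcontψ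
  have hKφne : Kφ.Nonempty := hne.image _
  have hKψne : Kψ.Nonempty := hne.image _
  obtain ⟨pmax, hpmax, hpmax'⟩ := hKφc.sSup_mem hKφne
  obtain ⟨q, hq, hq'⟩ := hKψc.sSup_mem hKψne
  have hle1 : sInf Kφ ≤ sSup Kφ := csInf_le_csSup hKφne hKφc.bddBelow hKφc.bddAbove
  have hfq : sInf Kφ ≤ expE q φ := csInf_le hKφc.bddBelow ⟨q, hq, rfl⟩
  have hm2le : sInf Kψ ≤ expE pmax ψ := csInf_le hKψc.bddBelow ⟨pmax, hpmax, rfl⟩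
  have e1 := hkey pmax hpmax
  have e2 := hkey q hq
  rw [show expE pmax φ = sSup Kφ from hpmax'] at e1
  rw [show expE q ψ = sSup Kψ from hq'] at e2
  have h1α : (0:ℝ) ≤ 1 - α := by linarith
  have hA : (1 - α) * sInf Kψ ≤ c - α * sSup Kφ := by
    have := mul_le_mul_of_nonneg_left hm2le h1α
    linarith
  have hB : (1 - α) * sSup Kψ ≤ c - α * sInf Kφ := by
    have := mul_le_mul_of_nonneg_left hfq h0.le
    linarith
  have hC : a * ((1 - α) * sInf Kψ) ≤ a * (c - α * sSup Kφ) :=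
    mul_le_mul_of_nonneg_left hA (by linarith)
  have hD : (1 - a) * ((1 - α) * sSup Kψ) ≤ (1 - a) * (c - α * sInf Kφ) :=
    mul_le_mul_of_nonneg_left hB (by linarith)
  have hU' : (1 - α) * (a * sInf Kφ + (1 - a) * sSup Kφ)
      = (1 - α) * (a * sInf Kψ + (1 - a) * sSup Kψ) := by rw [hU]
  have hslack : 0 ≤ α * ((2 * a - 1) * (sSup Kφ - sInf Kφ)) :=
    mul_nonneg h0.le (mul_nonneg (by linarith) (by linarith))
  nlinarith [hC, hD, hU', hslack]
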